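/- Fix q ∈ [0,1) with 2(1−q)⁴ > 1. Let (p_n)_{n≥2} be a sequence in (0,1] satisfying p_n > (3·√((n−1)·log(n−1)) − 1) / ((n−1)·(2(1−q)⁴ − 1)) for every n ≥ 2, and set t_n = ⌈((n−1)·p_n + √((n−1)·log(n−1)) + 1)/2⌉. Then n · Σ_{k=0}^{t_n − 1} ((n−1) choose k) · (p_n(1−q)⁴)^k · (1 − p_n(1−q)⁴)^{n−1−k} → 0 as n → ∞. -/

import Mathlib

-- tanh-type inequality: 1 - e^{-x} ≤ (x/2)(1 + e^{-x}) for x ≥ 0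
lemma aux_tanh (x : ℝ) (hx : 0 ≤ x) :
    1 - Real.exp (-x) ≤ x / 2 * (1 + Real.exp (-x)) := by
  have key : ∀ y ∈ Set.Ici (0:ℝ),
      MonotoneOn (fun y : ℝ => y / 2 * (1 + Real.exp (-y)) - (1 - Real.exp (-y))) (Set.Ici 0) →
      True := fun _ _ _ => trivial
  set f : ℝ → ℝ := fun y => y / 2 * (1 + Real.exp (-y)) - (1 - Real.exp (-y)) with hf
  have hderiv : ∀ y : ℝ, HasDerivAt f
      (1 / 2 * (1 + Real.exp (-y)) + y / 2 * (-Real.exp (-y)) - Real.exp (-y)) y := by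
    intro y
    have he : HasDerivAt (fun y : ℝ => Real.exp (-y)) (-Real.exp (-y)) y := by
      simpa [Function.comp_def] using (Real.hasDerivAt_exp (-y)).comp y ((hasDerivAt_id y).neg)
    have h1 : HasDerivAt (fun y : ℝ => y / 2 * (1 + Real.exp (-y)))
        (1 / 2 * (1 + Real.exp (-y)) + y / 2 * (-Real.exp (-y))) y := by
      have := ((hasDerivAt_id y).div_const 2).fun_mul ((hasDerivAt_const y (1:ℝ)).fun_add he)
      simpa using this
    have h2 : HasDerivAt (fun y : ℝ => 1 - Real.exp (-y)) (Real.exp (-y)) y := by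
      simpa using (hasDerivAt_const y (1:ℝ)).fun_sub he
    simpa using h1.fun_sub h2
  have hmono : MonotoneOn f (Set.Ici 0) := by
    apply monotoneOn_of_deriv_nonneg (convex_Ici 0)
    · exact (Differentiable.continuous (fun y => (hderiv y).differentiableAt)).continuousOn
    · exact fun y _ => ((hderiv y).differentiableAt).differentiableWithinAt
    · intro y hy
      rw [interior_Ici] at hy
      rw [(hderiv y).deriv]
      have hmul : Real.exp (-y) * Real.exp y = 1 := by
        rw [← Real.exp_add]; simp
      have h1 : Real.exp (-y) * (1 + y) ≤ 1 := by
        nlinarith [Real.add_one_le_exp y, Real.exp_nonneg (-y)]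
      nlinarith [Real.exp_nonneg (-y), (Set.mem_Ioi.mp hy).le]
  have h0 : f 0 = 0 := by simp [hf]
  have := hmono (Set.self_mem_Ici) (Set.mem_Ici.mpr hx) hx
  rw [h0] at this
  simpa [hf] using this

-- core algebraic inequality (derivative nonnegativity condition)
lemma aux_core (r l : ℝ) (hr0 : 0 ≤ r) (hr1 : r ≤ 1) (hl : 0 ≤ l) :
    r * (1 - r) * (1 - Real.exp (-l)) ≤ l / 4 * (1 - r + r * Real.exp (-l)) := by
  set e : ℝ := Real.exp (-(l/2)) with he
  have he0 : 0 < e := Real.exp_pos _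
  have he1 : e ≤ 1 := Real.exp_le_one_iff.mpr (by linarith)
  have hesq : e * e = Real.exp (-l) := by
    rw [he, ← Real.exp_add]; ring_nf
  have htanh : 1 - e ≤ l / 4 * (1 + e) := by
    have := aux_tanh (l/2) (by linarith)
    rw [← he] at this
    linarith
  -- step 1 : r(1-r)(1+e)^2 ≤ 1 - r + r e^2
  have step1 : r * (1 - r) * (1 + e)^2 ≤ 1 - r + r * (e * e) := by
    nlinarith [sq_nonneg (1 - r * (1 + e))]
  -- combine
  have hrr : 0 ≤ r * (1 - r) := mul_nonneg hr0 (by linarith)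
  have h2 : r * (1 - r) * (1 - e) * (1 + e) ≤ l / 4 * (r * (1 - r) * (1 + e)^2) := by
    have := mul_le_mul_of_nonneg_left htanh (mul_nonneg hrr (by linarith : (0:ℝ) ≤ 1 + e))
    nlinarith [this]
  have h3 : l / 4 * (r * (1 - r) * (1 + e)^2) ≤ l / 4 * (1 - r + r * (e * e)) :=
    mul_le_mul_of_nonneg_left step1 (by linarith)
  have hfinal : r * (1 - r) * (1 - e * e) ≤ l / 4 * (1 - r + r * (e * e)) := by
    nlinarith [h2, h3]
  rw [← hesq]
  linarith [hfinal]

lemma aux_hoeffding (r l : ℝ) (hr0 : 0 ≤ r) (hr1 : r ≤ 1) (hl : 0 ≤ l) :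
    1 - r + r * Real.exp (-l) ≤ Real.exp (-(r*l) + l^2/8) := by
  have hD : ∀ x : ℝ, 0 < 1 - r + r * Real.exp (-x) := by
    intro x
    rcases eq_or_lt_of_le hr0 with h | h
    · simp [← h]
    · have := Real.exp_pos (-x); nlinarith
  set g : ℝ → ℝ := fun x => (-(r*x) + x^2/8) - Real.log (1 - r + r * Real.exp (-x)) with hg
  have hderiv : ∀ x : ℝ, HasDerivAt g
      ((-r + x/4) - (-(r * Real.exp (-x)) / (1 - r + r * Real.exp (-x)))) x := by
    intro x
    have he : HasDerivAt (fun y : ℝ => Real.exp (-y)) (-Real.exp (-x)) x := by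
      simpa [Function.comp_def] using (Real.hasDerivAt_exp (-x)).comp x ((hasDerivAt_id x).neg)
    have hDd : HasDerivAt (fun y : ℝ => 1 - r + r * Real.exp (-y)) (-(r * Real.exp (-x))) x := by
      have := (hasDerivAt_const x ((1:ℝ) - r)).fun_add (he.const_mul r)
      simpa [mul_comm, mul_neg] using this
    have hlog : HasDerivAt (fun y : ℝ => Real.log (1 - r + r * Real.exp (-y)))
        (-(r * Real.exp (-x)) / (1 - r + r * Real.exp (-x))) x :=
      hDd.log (hD x).ne'
    have hpoly : HasDerivAt (fun y : ℝ => -(r*y) + y^2/8) (-r + x/4) x := by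
      have h1 : HasDerivAt (fun y : ℝ => -(r*y)) (-r) x := by
        simpa using ((hasDerivAt_id x).const_mul r).fun_neg
      have h2 : HasDerivAt (fun y : ℝ => y^2/8) (x/4) x := by
        have := ((hasDerivAt_pow 2 x)).div_const 8
        norm_num at this
        refine this.congr_deriv ?_
        ring
      simpa using h1.fun_add h2
    simpa [hg] using hpoly.fun_sub hlog
  have hmono : MonotoneOn g (Set.Ici 0) := by
    apply monotoneOn_of_deriv_nonneg (convex_Ici 0)
    · exact (Differentiable.continuous (fun y => (hderiv y).differentiableAt)).continuousOn
    · exact fun y _ => ((hderiv y).differentiableAt).differentiableWithinAt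
    · intro x hx
      rw [interior_Ici] at hx
      rw [(hderiv x).deriv]
      have hcore := aux_core r x hr0 hr1 (Set.mem_Ioi.mp hx).le
      have hDx := hD x
      rw [sub_nonneg, neg_div, neg_le, ← sub_nonneg]
      have heq : r * Real.exp (-x) / (1 - r + r * Real.exp (-x)) - (r - x/4)
          = (r * Real.exp (-x) - (r - x/4) * (1 - r + r * Real.exp (-x)))
            / (1 - r + r * Real.exp (-x)) := by
        field_simp
      have h1 : (0:ℝ) ≤ (r * Real.exp (-x) - (r - x/4) * (1 - r + r * Real.exp (-x)))
          / (1 - r + r * Real.exp (-x)) := by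
        apply div_nonneg _ hDx.le
        nlinarith [hcore]
      rw [← heq] at h1
      linarith
  have h0 : g 0 = 0 := by simp [hg]
  have hgl : 0 ≤ g l := by
    have := hmono Set.self_mem_Ici (Set.mem_Ici.mpr hl) hl
    rw [h0] at this; exact this
  have : Real.log (1 - r + r * Real.exp (-l)) ≤ -(r*l) + l^2/8 := by
    simp only [hg] at hgl; linarith
  exact (Real.log_le_iff_le_exp (hD l)).mp this

lemma aux_chernoff (m t : ℕ) (r a lam : ℝ) (hr0 : 0 ≤ r) (hr1 : r ≤ 1)
    (hlam : 0 ≤ lam) (ht : t ≤ m + 1) (hta : ∀ k : ℕ, k < t → (k:ℝ) ≤ a) :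
    ∑ k ∈ Finset.range t, (m.choose k : ℝ) * r^k * (1-r)^(m-k)
      ≤ Real.exp (lam * a) * Real.exp ((m:ℝ) * (-(r*lam) + lam^2/8)) := by
  have h1r : (0:ℝ) ≤ 1 - r := by linarith
  have hre : (0:ℝ) ≤ r * Real.exp (-lam) := mul_nonneg hr0 (Real.exp_nonneg _)
  have key : ∀ k ∈ Finset.range t,
      (m.choose k : ℝ) * r^k * (1-r)^(m-k)
      ≤ Real.exp (lam*a) * ((m.choose k : ℝ) * (r*Real.exp (-lam))^k * (1-r)^(m-k)) := by
    intro k hk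
    have hka : (k:ℝ) ≤ a := hta k (Finset.mem_range.mp hk)
    have h1 : (1:ℝ) ≤ Real.exp (lam*a) * Real.exp (-lam)^k := by
      rw [← Real.exp_nat_mul, ← Real.exp_add]
      apply Real.one_le_exp
      have h2 : (0:ℝ) ≤ lam * (a - k) := mul_nonneg hlam (by linarith)
      nlinarith [h2]
    have hterm : (0:ℝ) ≤ (m.choose k : ℝ) * r^k * (1-r)^(m-k) :=
      mul_nonneg (mul_nonneg (Nat.cast_nonneg _) (pow_nonneg hr0 _)) (pow_nonneg h1r _)
    calc (m.choose k : ℝ) * r^k * (1-r)^(m-k)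
        = ((m.choose k : ℝ) * r^k * (1-r)^(m-k)) * 1 := by ring
      _ ≤ ((m.choose k : ℝ) * r^k * (1-r)^(m-k)) * (Real.exp (lam*a) * Real.exp (-lam)^k) :=
          mul_le_mul_of_nonneg_left h1 hterm
      _ = Real.exp (lam*a) * ((m.choose k : ℝ) * (r*Real.exp (-lam))^k * (1-r)^(m-k)) := by
          rw [mul_pow]; ring
  calc ∑ k ∈ Finset.range t, (m.choose k : ℝ) * r^k * (1-r)^(m-k)
      ≤ ∑ k ∈ Finset.range t,
          Real.exp (lam*a) * ((m.choose k : ℝ) * (r*Real.exp (-lam))^k * (1-r)^(m-k)) :=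
        Finset.sum_le_sum key
    _ = Real.exp (lam*a) * ∑ k ∈ Finset.range t,
          (m.choose k : ℝ) * (r*Real.exp (-lam))^k * (1-r)^(m-k) := by
        rw [Finset.mul_sum]
    _ ≤ Real.exp (lam*a) * ∑ k ∈ Finset.range (m+1),
          (m.choose k : ℝ) * (r*Real.exp (-lam))^k * (1-r)^(m-k) := by
        apply mul_le_mul_of_nonneg_left _ (Real.exp_nonneg _)
        apply Finset.sum_le_sum_of_subset_of_nonneg (Finset.range_subset_range.mpr ht)
        intro k _ _
        exact mul_nonneg (mul_nonneg (Nat.cast_nonneg _) (pow_nonneg hre _)) (pow_nonneg h1r _)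
    _ = Real.exp (lam*a) * (r*Real.exp (-lam) + (1-r))^m := by
        rw [add_pow]
        congr 1
        apply Finset.sum_congr rfl
        intro k _
        ring
    _ ≤ Real.exp (lam*a) * Real.exp (-(r*lam) + lam^2/8)^m := by
        apply mul_le_mul_of_nonneg_left _ (Real.exp_nonneg _)
        apply pow_le_pow_left₀ (by linarith)
        linarith [aux_hoeffding r lam hr0 hr1 hlam]
    _ = Real.exp (lam*a) * Real.exp ((m:ℝ) * (-(r*lam) + lam^2/8)) := by
        rw [← Real.exp_nat_mul]

set_option maxHeartbeats 2000000 in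
lemma aux_main (m : ℕ) (hm : 4 ≤ m) (P c : ℝ) (hP0 : 0 < P) (hP1 : P ≤ 1)
    (hc0 : 0 < c) (hc1 : c ≤ 1) (hc2 : 1 < 2*c)
    (hlb : (3 * Real.sqrt ((m:ℝ) * Real.log (m:ℝ)) - 1) / ((m:ℝ) * (2*c - 1)) < P) :
    ((m:ℝ)+1) * ∑ k ∈ Finset.range
        (⌈((m:ℝ) * P + Real.sqrt ((m:ℝ) * Real.log (m:ℝ)) + 1)/2⌉₊),
      (m.choose k : ℝ) * (P*c)^k * (1 - P*c)^(m-k)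
    ≤ 2 * Real.exp 4 / (m:ℝ) := by
  set M : ℝ := (m:ℝ) with hMdef
  have hM4 : (4:ℝ) ≤ M := by rw [hMdef]; exact_mod_cast hm
  have hM0 : (0:ℝ) < M := by linarith
  have hlog0 : 0 ≤ Real.log M := Real.log_nonneg (by linarith)
  set s : ℝ := Real.sqrt (M * Real.log M) with hsdef
  have hs0 : 0 ≤ s := Real.sqrt_nonneg _
  have hs2 : s^2 = M * Real.log M := Real.sq_sqrt (mul_nonneg hM0.le hlog0)
  have hs1 : 1 < s := by
    have hl2 : Real.log 2 ≤ Real.log M := Real.log_le_log (by norm_num) (by linarith)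
    have h1 : (1:ℝ) < M * Real.log M := by
      nlinarith [Real.log_two_gt_d9, mul_nonneg (by linarith : (0:ℝ) ≤ M - 4) hlog0]
    nlinarith [hs2, hs0]
  have hsM : s ≤ M := by
    have h1 : s^2 ≤ M^2 := by
      nlinarith [hs2, Real.log_le_sub_one_of_pos hM0]
    nlinarith [h1, hs0, hM0]
  -- s ≤ M - 1
  have hssM : Real.sqrt M * Real.sqrt M = M := Real.mul_self_sqrt hM0.le
  have hsqrtM : 2 ≤ Real.sqrt M := by
    nlinarith [hssM, Real.sqrt_nonneg M]
  have hlogM2 : Real.log M ≤ 2 * Real.sqrt M - 2 := by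
    have h1 : Real.log (Real.sqrt M) ≤ Real.sqrt M - 1 :=
      Real.log_le_sub_one_of_pos (by positivity)
    have h2 : Real.log (Real.sqrt M) = Real.log M / 2 := Real.log_sqrt hM0.le
    linarith
  have hsM1 : s ≤ M - 1 := by
    have h4 : 2*M*Real.sqrt M ≤ M * M := by
      nlinarith [hssM, hsqrtM, hM0, mul_nonneg hM0.le (Real.sqrt_nonneg M)]
    have hsq : s^2 ≤ (M-1)^2 := by
      nlinarith [hs2, mul_le_mul_of_nonneg_left hlogM2 hM0.le, h4]
    nlinarith [hsq, hs0, hM4]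
  -- threshold facts
  set t : ℕ := ⌈(M * P + s + 1)/2⌉₊ with htdef
  have hx0 : (0:ℝ) ≤ (M * P + s + 1)/2 := by nlinarith [mul_pos hM0 hP0]
  have hta : (t:ℝ) < (M*P+s+1)/2 + 1 := Nat.ceil_lt_add_one hx0
  have ha_lt : (t:ℝ) - 1 < (M*P+s+1)/2 := by linarith
  set a : ℝ := (t:ℝ) - 1 with hadef
  -- success probability
  set R : ℝ := P * c with hRdef
  have hR0 : 0 < R := mul_pos hP0 hc0
  have hR1 : R ≤ 1 := by nlinarith
  have hMP : M * P ≤ M := by nlinarith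
  -- lower bound on mean
  have hden : (0:ℝ) < M * (2*c - 1) := mul_pos hM0 (by linarith)
  have hlb' : 3*s - 1 < P * (M * (2*c - 1)) := by
    rw [div_lt_iff₀ hden] at hlb
    exact hlb
  have hMR : (M*P + 3*s - 1)/2 < M * R := by
    have hid : P * (M*(2*c-1)) = 2*(M*R) - M*P := by rw [hRdef]; ring
    linarith [hlb', hid]
  have hgap : s - 1 < M * R - a := by linarith
  have hgap0 : 0 < M * R - a := by linarith
  set gap : ℝ := M * R - a with hgapdef
  set lam : ℝ := 4 * gap / M with hlamdef
  have hlam0 : 0 ≤ lam := by positivity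
  -- t ≤ m + 1
  have haM : a ≤ M := by linarith [ha_lt, hsM1, hMP]
  have htm : t ≤ m + 1 := by
    have h1 : (t:ℝ) ≤ (m:ℝ) + 1 := by rw [← hMdef]; linarith [haM]
    exact_mod_cast h1
  have hka : ∀ k : ℕ, k < t → (k:ℝ) ≤ a := by
    intro k hk
    have h1 : ((k:ℝ) + 1) ≤ (t:ℝ) := by exact_mod_cast Nat.succ_le_of_lt hk
    rw [hadef]; linarith
  -- Chernoff
  have hcher := aux_chernoff m t R a lam hR0.le hR1 hlam0 htm hka
  -- exponent identity
  have hexp : lam * a + M * (-(R*lam) + lam^2/8) = -(2*gap^2/M) := by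
    rw [hlamdef]
    have haR : a = M*R - gap := by rw [hgapdef]; ring
    rw [haR]
    field_simp
    ring
  have hS : ∑ k ∈ Finset.range t, (m.choose k : ℝ) * R^k * (1-R)^(m-k)
      ≤ Real.exp (-(2*gap^2/M)) := by
    rw [← hexp, Real.exp_add]
    exact hcher
  -- exponent bounds
  have hb1 : -(2*gap^2/M) ≤ -(2*(s-1)^2/M) := by
    have hsq : (s-1)^2 ≤ gap^2 := by nlinarith [hgap, hs1]
    have h1 : 2*(s-1)^2/M ≤ 2*gap^2/M :=
      div_le_div_of_nonneg_right (by linarith) hM0.le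
    linarith
  have hb2 : -(2*(s-1)^2/M) ≤ 4 - 2*Real.log M := by
    have hnum : (2*Real.log M - 4) * M ≤ 2*(s-1)^2 := by nlinarith [hs2, hsM]
    have h1 : 2*Real.log M - 4 ≤ 2*(s-1)^2/M := by
      rw [le_div_iff₀ hM0]; linarith
    linarith
  have hexp2 : Real.exp (4 - 2*Real.log M) = Real.exp 4 / M^2 := by
    rw [Real.exp_sub]
    congr 1
    rw [show (2:ℝ)*Real.log M = Real.log (M^2) by rw [Real.log_pow]; push_cast; ring]
    exact Real.exp_log (by positivity)
  -- combine
  have hSfin : ∑ k ∈ Finset.range t, (m.choose k : ℝ) * R^k * (1-R)^(m-k)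
      ≤ Real.exp 4 / M^2 := by
    rw [← hexp2]
    exact hS.trans (Real.exp_le_exp.mpr (hb1.trans hb2))
  calc (M+1) * ∑ k ∈ Finset.range t, (m.choose k : ℝ) * (P*c)^k * (1-P*c)^(m-k)
      = (M+1) * ∑ k ∈ Finset.range t, (m.choose k : ℝ) * R^k * (1-R)^(m-k) := by
        rw [hRdef]
    _ ≤ (M+1) * (Real.exp 4 / M^2) :=
        mul_le_mul_of_nonneg_left hSfin (by linarith)
    _ ≤ (2*M) * (Real.exp 4 / M^2) := by
        apply mul_le_mul_of_nonneg_right (by linarith) (by positivity)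
    _ = 2 * Real.exp 4 / M := by
        field_simp

/-- (Theorem 3 of the paper, probabilistic content.)
If `p n` exceeds the reliability threshold and
`t n = ⌈((n−1)p n + √((n−1)log(n−1)) + 1)/2⌉`, then the union bound on the reliability
failure probability, `n · P(Binomial(n−1, p n (1−q)⁴) < t n)`, tends to `0`. -/
theorem ccesa_reliability_union_bound_tendsto_zero
    (q : ℝ) (hq : q ∈ Set.Ico (0:ℝ) 1) (hq2 : 1 < 2*(1-q)^4)
    (p : ℕ → ℝ) (hp : ∀ n, p n ∈ Set.Ioc (0:ℝ) 1)
    (hplb : ∀ n : ℕ, 2 ≤ n →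
      (3 * Real.sqrt (((n:ℝ)-1) * Real.log ((n:ℝ)-1)) - 1)
        / (((n:ℝ)-1) * (2*(1-q)^4 - 1)) < p n) :
    Filter.Tendsto (fun n : ℕ =>
      (n:ℝ) * ∑ k ∈ Finset.range
          (⌈(((n:ℝ)-1) * p n + Real.sqrt (((n:ℝ)-1) * Real.log ((n:ℝ)-1)) + 1)/2⌉₊),
        ((n-1).choose k : ℝ) * (p n * (1-q)^4)^k * (1 - p n * (1-q)^4)^(n-1-k))
      Filter.atTop (nhds 0) := by
  obtain ⟨hq0, hq1⟩ := hq
  have hc0 : 0 < (1-q)^4 := pow_pos (by linarith) 4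
  have hc1 : (1-q)^4 ≤ 1 := pow_le_one₀ (by linarith) (by linarith)
  refine squeeze_zero' (g := fun n : ℕ => 2 * Real.exp 4 / ((n:ℝ) - 1)) ?_ ?_ ?_
  · -- eventual nonnegativity
    filter_upwards with n
    apply mul_nonneg (Nat.cast_nonneg n)
    apply Finset.sum_nonneg
    intro k _
    obtain ⟨h1, h2⟩ := hp n
    have hr0 : 0 ≤ p n * (1-q)^4 := by positivity
    have hr1 : p n * (1-q)^4 ≤ 1 := by nlinarith
    exact mul_nonneg (mul_nonneg (Nat.cast_nonneg _) (pow_nonneg hr0 _))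
      (pow_nonneg (by linarith) _)
  · -- eventual bound
    rw [Filter.eventually_atTop]
    refine ⟨5, fun n hn => ?_⟩
    beta_reduce
    have hn1 : 1 ≤ n := by omega
    have hm4 : 4 ≤ n - 1 := by omega
    have hcast : ((n:ℝ) - 1) = ((n-1 : ℕ):ℝ) := by
      rw [Nat.cast_sub hn1]; norm_num
    obtain ⟨hP0, hP1⟩ := hp n
    have hlb' : (3 * Real.sqrt (((n-1:ℕ):ℝ) * Real.log ((n-1:ℕ):ℝ)) - 1)
        / (((n-1:ℕ):ℝ) * (2*(1-q)^4 - 1)) < p n := by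
      rw [← hcast]
      exact hplb n (by omega)
    have hmain := aux_main (n-1) hm4 (p n) ((1-q)^4) hP0 hP1 hc0 hc1 hq2 hlb'
    have hn' : (n:ℝ) = ((n-1:ℕ):ℝ) + 1 := by
      rw [Nat.cast_sub hn1]; ring
    rw [hcast, hn']
    exact hmain
  · -- limit
    apply Filter.Tendsto.div_atTop tendsto_const_nhds
    have := Filter.tendsto_atTop_add_const_right Filter.atTop (-1 : ℝ)
      tendsto_natCast_atTop_atTop
    simpa [sub_eq_add_neg] using this
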